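/- Let SAFE, MSAFE, and CSAFE denote the classes of safe, msafe, and csafe quad-systems respectively. Then CSAFE ⊊ MSAFE ⊊ SAFE: every csafe quad-system is msafe, every msafe quad-system is safe, and both inclusions are strict. -/

import Mathlib

/-! ## Core formalization: quads, quad-systems, bridge rules, distributed chase,
    distributed interpretation structures, CCQ entailment and safety notions. -/

/-- A quad over elements of type `C`: context identifier, subject, predicate, object. -/
structure Quad (C : Type) where
  ctx : C
  s : C
  p : C
  o : C

/-- Terms over constants `C`, with variables indexed by naturals. -/
inductive Term (C : Type) : Type
  | var : ℕ → Term C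
  | const : C → Term C

/-- A quad pattern: a context identifier together with a triple pattern. -/
structure QuadPattern (C : Type) where
  ctx : C
  s : Term C
  p : Term C
  o : Term C

/-- Constants enriched with Skolem blank nodes: `sk i j w` is the Skolem blank node
generated by the bridge rule with identifier `i`, at its existential variable `j`,
from the instantiated frontier vector `w` (its origin vector). -/
inductive SConst (C : Type) : Type
  | base : C → SConst C
  | sk : ℕ → ℕ → List (SConst C) → SConst C

/-- Ground quads appearing in the distributed chase. -/
structure GQuad (C : Type) where
  ctx : C
  s : SConst C
  p : SConst C
  o : SConst C

def Term.inst {C : Type} (μ : ℕ → SConst C) : Term C → SConst C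
  | .var v => μ v
  | .const a => .base a

def QuadPattern.inst {C : Type} (μ : ℕ → SConst C) (q : QuadPattern C) : GQuad C :=
  ⟨q.ctx, q.s.inst μ, q.p.inst μ, q.o.inst μ⟩

/-- A forall-existential bridge rule: body and head are sets of quad patterns,
`frontier` is the vector `x⃗` of frontier variables and `exVars` the existential
variables `y⃗` of the head. -/
structure BridgeRule (C : Type) where
  id : ℕ
  body : List (QuadPattern C)
  head : List (QuadPattern C)
  frontier : List ℕ
  exVars : Finset ℕ

def Term.varsOf {C : Type} : Term C → Finset ℕ
  | .var v => {v}
  | .const _ => ∅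

def QuadPattern.varsOf {C : Type} (q : QuadPattern C) : Finset ℕ :=
  q.s.varsOf ∪ q.p.varsOf ∪ q.o.varsOf

def patsVars {C : Type} (l : List (QuadPattern C)) : Finset ℕ :=
  l.foldr (fun q s => q.varsOf ∪ s) ∅

/-- Well-formedness of a bridge rule of the form
`∀x⃗∀z⃗ (body(x⃗,z⃗) → ∃y⃗ head(x⃗,y⃗))`. -/
def BridgeRule.WF {C : Type} (r : BridgeRule C) : Prop :=
  (∀ v ∈ patsVars r.head, v ∉ r.exVars → v ∈ r.frontier) ∧
  (∀ v ∈ r.frontier, v ∈ patsVars r.body) ∧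
  (∀ v ∈ r.exVars, v ∉ patsVars r.body ∧ v ∉ r.frontier) ∧
  r.frontier.Nodup

/-- A quad-system: a quad-graph together with a set of bridge rules. -/
structure QuadSystem (C : Type) where
  quads : Set (Quad C)
  rules : Set (BridgeRule C)

/-- Well-formed quad-systems: finitely many quads and rules, well-formed bridge rules
with unique rule identifiers. -/
def QuadSystem.WF {C : Type} (QS : QuadSystem C) : Prop :=
  (∀ r ∈ QS.rules, r.WF) ∧
  (∀ r ∈ QS.rules, ∀ r' ∈ QS.rules, r.id = r'.id → r = r') ∧
  QS.quads.Finite ∧ QS.rules.Finite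

/-- Extension of an assignment mapping each existential variable of `r` to the
corresponding fresh Skolem blank node. -/
def skExt {C : Type} (r : BridgeRule C) (μ : ℕ → SConst C) : ℕ → SConst C :=
  fun v => if v ∈ r.exVars then SConst.sk r.id v (r.frontier.map μ) else μ v

def headSatisfied {C : Type} (r : BridgeRule C) (μ : ℕ → SConst C)
    (I : Set (GQuad C)) : Prop :=
  ∃ ν : ℕ → SConst C, (∀ v, v ∉ r.exVars → ν v = μ v) ∧ ∀ q ∈ r.head, q.inst ν ∈ I

/-- `(r, μ)` is applicable on `I` iff `body(r)[μ] ⊆ I` and no extension of `μ`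
satisfies the head in `I` (restricted chase). -/
def applicable {C : Type} (r : BridgeRule C) (μ : ℕ → SConst C)
    (I : Set (GQuad C)) : Prop :=
  (∀ q ∈ r.body, q.inst μ ∈ I) ∧ ¬ headSatisfied r μ I

/-- The result of applying assignment `μ` to bridge rule `r`. -/
def applyRule {C : Type} (r : BridgeRule C) (μ : ℕ → SConst C) : Set (GQuad C) :=
  {q | ∃ h ∈ r.head, q = h.inst (skExt r μ)}

def Quad.toGQuad {C : Type} (q : Quad C) : GQuad C :=
  ⟨q.ctx, .base q.s, .base q.p, .base q.o⟩

/-- One iteration of the distributed chase. -/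
def chaseStep {C : Type} (QS : QuadSystem C) (I : Set (GQuad C)) : Set (GQuad C) :=
  I ∪ {q | ∃ r ∈ QS.rules, ∃ μ : ℕ → SConst C, applicable r μ I ∧ q ∈ applyRule r μ}

/-- The state of the distributed chase after `n` iterations. -/
def dChaseAt {C : Type} (QS : QuadSystem C) : ℕ → Set (GQuad C)
  | 0 => Quad.toGQuad '' QS.quads
  | n + 1 => chaseStep QS (dChaseAt QS n)

/-- The distributed chase of a quad-system. -/
def dChase {C : Type} (QS : QuadSystem C) : Set (GQuad C) :=
  ⋃ n, dChaseAt QS n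

/-! ### Distributed interpretation structures and entailment -/

/-- A distributed interpretation structure: a common domain, a rigid interpretation of
constants, and for each context a set of triples holding in it. -/
structure Interp (C : Type) where
  Dom : Type
  constInt : C → Dom
  holds : C → Dom → Dom → Dom → Prop

def Term.eval {C : Type} (I : Interp C) (σ : ℕ → I.Dom) : Term C → I.Dom
  | .var v => σ v
  | .const a => I.constInt a

def Interp.satQP {C : Type} (I : Interp C) (σ : ℕ → I.Dom) (q : QuadPattern C) : Prop :=
  I.holds q.ctx (q.s.eval I σ) (q.p.eval I σ) (q.o.eval I σ)

def Interp.satQuad {C : Type} (I : Interp C) (q : Quad C) : Prop :=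
  I.holds q.ctx (I.constInt q.s) (I.constInt q.p) (I.constInt q.o)

def Interp.satRule {C : Type} (I : Interp C) (r : BridgeRule C) : Prop :=
  ∀ σ : ℕ → I.Dom, (∀ q ∈ r.body, I.satQP σ q) →
    ∃ σ' : ℕ → I.Dom, (∀ v, v ∉ r.exVars → σ' v = σ v) ∧ ∀ q ∈ r.head, I.satQP σ' q

def Interp.isModel {C : Type} (I : Interp C) (QS : QuadSystem C) : Prop :=
  (∀ q ∈ QS.quads, I.satQuad q) ∧ ∀ r ∈ QS.rules, I.satRule r

def QuadSystem.Consistent {C : Type} (QS : QuadSystem C) : Prop :=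
  ∃ I : Interp C, I.isModel QS

/-- A (boolean) contextualized conjunctive query: a conjunction of quad patterns,
all of whose variables are existentially quantified. -/
abbrev CCQ (C : Type) : Type := List (QuadPattern C)

def Interp.satCCQ {C : Type} (I : Interp C) (Q : CCQ C) : Prop :=
  ∃ σ : ℕ → I.Dom, ∀ q ∈ Q, I.satQP σ q

/-- CCQ entailment: every model of the quad-system satisfies the query. -/
def entailsCCQ {C : Type} (QS : QuadSystem C) (Q : CCQ C) : Prop :=
  ∀ I : Interp C, I.isModel QS → I.satCCQ Q

/-! ### Skolem blank nodes: descendants, origin rule ids, origin vectors,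
origin contexts, and the safety notions -/

def SConst.isSk {C : Type} : SConst C → Prop
  | .sk _ _ _ => True
  | .base _ => False

/-- `childOf k b`: `k` is a child of the Skolem blank node `b`,
i.e. `k` occurs in the origin vector of `b`. -/
def childOf {C : Type} (k b : SConst C) : Prop :=
  ∃ i j w, b = SConst.sk i j w ∧ k ∈ w

/-- `descOf k b`: `k` is a descendant of `b` (transitive closure of `childOf`). -/
def descOf {C : Type} : SConst C → SConst C → Prop :=
  Relation.TransGen childOf

def occursIn {C : Type} (b : SConst C) (q : GQuad C) : Prop :=
  q.s = b ∨ q.p = b ∨ q.o = b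

def inChase {C : Type} (QS : QuadSystem C) (b : SConst C) : Prop :=
  ∃ q ∈ dChase QS, occursIn b q

def appearsAt {C : Type} (QS : QuadSystem C) (b : SConst C) (n : ℕ) : Prop :=
  ∃ q ∈ dChaseAt QS n, occursIn b q

/-- The origin contexts of a constant: the contexts in which triples containing it
are first generated during the chase construction. -/
def originContexts {C : Type} (QS : QuadSystem C) (b : SConst C) : Set C :=
  {c | ∃ n, (∀ m, m < n → ¬ appearsAt QS b m) ∧
        ∃ q ∈ dChaseAt QS n, occursIn b q ∧ q.ctx = c}

/-- Isomorphism of two vectors of constants: a bijective renaming of blank nodes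
(fixing all non-blank constants) carrying one to the other. -/
def VecIso {C : Type} (v w : List (SConst C)) : Prop :=
  ∃ g : SConst C → SConst C, w = v.map g ∧ (∀ x : SConst C, ¬ x.isSk → g x = x) ∧
    Set.InjOn g {x | x ∈ v ∧ x.isSk}

/-- A quad-system is unsafe iff its dChase contains two distinct Skolem blank nodes,
one a descendant of the other, with the same origin rule id and isomorphic
origin vectors. -/
def QuadSystem.Unsafe {C : Type} (QS : QuadSystem C) : Prop :=
  ∃ i j w j' w', inChase QS (SConst.sk i j w) ∧ inChase QS (SConst.sk i j' w') ∧
    SConst.sk i j w ≠ SConst.sk i j' w' ∧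
    descOf (SConst.sk i j w) (SConst.sk i j' w') ∧ VecIso w w'

def QuadSystem.Safe {C : Type} (QS : QuadSystem C) : Prop := ¬ QS.Unsafe

/-- A quad-system is unmsafe iff its dChase contains two distinct Skolem blank nodes,
one a descendant of the other, with the same origin rule id. -/
def QuadSystem.Unmsafe {C : Type} (QS : QuadSystem C) : Prop :=
  ∃ i j w j' w', inChase QS (SConst.sk i j w) ∧ inChase QS (SConst.sk i j' w') ∧
    SConst.sk i j w ≠ SConst.sk i j' w' ∧
    descOf (SConst.sk i j w) (SConst.sk i j' w')

def QuadSystem.Msafe {C : Type} (QS : QuadSystem C) : Prop := ¬ QS.Unmsafe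

/-- A quad-system is uncsafe iff its dChase contains two distinct Skolem blank nodes,
one a descendant of the other, with the same origin contexts. -/
def QuadSystem.Uncsafe {C : Type} (QS : QuadSystem C) : Prop :=
  ∃ b b' : SConst C, b.isSk ∧ b'.isSk ∧ b ≠ b' ∧ inChase QS b ∧ inChase QS b' ∧
    descOf b b' ∧ originContexts QS b = originContexts QS b'

def QuadSystem.Csafe {C : Type} (QS : QuadSystem C) : Prop := ¬ QS.Uncsafe
/-! ### Statement: `CSAFE ⊊ MSAFE ⊊ SAFE` — every csafe quad-system is msafe, every
msafe quad-system is safe, and both inclusions are strict. -/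


/-! ### Auxiliary machinery -/

section Aux
variable {C : Type}

lemma subset_chaseStep (QS : QuadSystem C) (I : Set (GQuad C)) : I ⊆ chaseStep QS I :=
  Set.subset_union_left

lemma dChaseAt_mono (QS : QuadSystem C) {m n : ℕ} (h : m ≤ n) :
    dChaseAt QS m ⊆ dChaseAt QS n := by
  induction n with
  | zero => simp_all
  | succ n ih =>
    rcases Nat.lt_or_ge m (n+1) with h' | h'
    · exact (ih (Nat.lt_succ_iff.mp h')).trans (subset_chaseStep QS _)
    · have : m = n + 1 := le_antisymm h h'
      subst this; exact subset_refl _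

lemma mem_term_varsOf {t : Term C} {v : ℕ} : v ∈ t.varsOf ↔ t = Term.var v := by
  cases t <;> simp [Term.varsOf] <;> aesop

lemma mem_qp_varsOf {q : QuadPattern C} {v : ℕ} :
    v ∈ q.varsOf ↔ (q.s = Term.var v ∨ q.p = Term.var v ∨ q.o = Term.var v) := by
  simp [QuadPattern.varsOf, mem_term_varsOf, or_assoc]

lemma mem_patsVars {l : List (QuadPattern C)} {v : ℕ} :
    v ∈ patsVars l ↔ ∃ h ∈ l, v ∈ h.varsOf := by
  induction l with
  | nil => simp [patsVars]
  | cons a l ih => simp [patsVars] at ih ⊢; aesop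

lemma occursIn_inst_of_var {q : QuadPattern C} {v : ℕ} (μ : ℕ → SConst C)
    (h : v ∈ q.varsOf) : occursIn (μ v) (q.inst μ) := by
  rcases mem_qp_varsOf.mp h with h | h | h <;>
    simp [occursIn, QuadPattern.inst, h, Term.inst]

lemma childOf_sizeOf_lt {k b : SConst C} (h : childOf k b) : sizeOf k < sizeOf b := by
  obtain ⟨i, j, w, rfl, hk⟩ := h
  have := List.sizeOf_lt_of_mem hk
  simp only [SConst.sk.sizeOf_spec]; omega

lemma descOf_sizeOf_lt {k b : SConst C} (h : descOf k b) : sizeOf k < sizeOf b := by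
  induction h with
  | single h => exact childOf_sizeOf_lt h
  | tail _ h ih => exact ih.trans (childOf_sizeOf_lt h)

lemma descOf_irrefl (b : SConst C) : ¬ descOf b b := fun h =>
  lt_irrefl _ (descOf_sizeOf_lt h)

/-- contexts of the head patterns of `r` in which variable `j` occurs. -/
def ctxSet (r : BridgeRule C) (j : ℕ) : Set C :=
  {c | ∃ h ∈ r.head, j ∈ h.varsOf ∧ h.ctx = c}

lemma key_term {I : Set (GQuad C)} {r : BridgeRule C}
    {μ : ℕ → SConst C} {i j : ℕ} {w : List (SConst C)}
    (hwf : r.WF) (happ : applicable r μ I)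
    (hfresh : ∀ q' ∈ I, ¬ occursIn (SConst.sk i j w) q')
    {h : QuadPattern C} (hh : h ∈ r.head) {t : Term C} (htv : t.varsOf ⊆ h.varsOf)
    (heq : t.inst (skExt r μ) = SConst.sk i j w) :
    t = Term.var j ∧ r.id = i ∧ j ∈ r.exVars ∧ r.frontier.map μ = w := by
  cases t with
  | const a => simp [Term.inst] at heq
  | var v =>
    simp only [Term.inst, skExt] at heq
    by_cases hv : v ∈ r.exVars
    · rw [if_pos hv] at heq
      obtain ⟨h1, h2, h3⟩ := SConst.sk.inj heq
      subst h1 h2 h3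
      exact ⟨rfl, rfl, hv, rfl⟩
    · rw [if_neg hv] at heq
      exfalso
      have hvh : v ∈ h.varsOf := htv (by simp [Term.varsOf])
      have hvhead : v ∈ patsVars r.head := mem_patsVars.mpr ⟨h, hh, hvh⟩
      have hvf : v ∈ r.frontier := hwf.1 v hvhead hv
      have hvb : v ∈ patsVars r.body := hwf.2.1 v hvf
      obtain ⟨h', hh', hvh'⟩ := mem_patsVars.mp hvb
      have : occursIn (μ v) (h'.inst μ) := occursIn_inst_of_var μ hvh'
      rw [heq] at this
      exact hfresh _ (happ.1 h' hh') this

lemma key_quad {QS : QuadSystem C} {I : Set (GQuad C)} {i j : ℕ} {w : List (SConst C)}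
    (hwf : QS.WF) {q : GQuad C} (hq : q ∈ chaseStep QS I)
    (hfresh : ∀ q' ∈ I, ¬ occursIn (SConst.sk i j w) q')
    (hocc : occursIn (SConst.sk i j w) q) :
    ∃ r ∈ QS.rules, ∃ μ, applicable r μ I ∧ r.id = i ∧ j ∈ r.exVars ∧
      r.frontier.map μ = w ∧ ∃ h ∈ r.head, j ∈ h.varsOf ∧ q = h.inst (skExt r μ) := by
  rcases hq with hq | hq
  · exact absurd hocc (hfresh q hq)
  · obtain ⟨r, hr, μ, happ, h, hh, rfl⟩ := hq
    have hrwf := hwf.1 r hr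
    have hvars : ∀ t : Term C, t.varsOf ⊆ h.varsOf →
        t.inst (skExt r μ) = SConst.sk i j w →
        t = Term.var j ∧ r.id = i ∧ j ∈ r.exVars ∧ r.frontier.map μ = w :=
      fun t ht he => key_term hrwf happ hfresh hh ht he
    rcases hocc with ho | ho | ho
    · obtain ⟨ht, h1, h2, h3⟩ := hvars h.s (by intro x hx; simp only [QuadPattern.varsOf, Finset.mem_union]; tauto) ho
      exact ⟨r, hr, μ, happ, h1, h2, h3, h, hh, mem_qp_varsOf.mpr (Or.inl ht), rfl⟩
    · obtain ⟨ht, h1, h2, h3⟩ := hvars h.p (by intro x hx; simp only [QuadPattern.varsOf, Finset.mem_union]; tauto) ho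
      exact ⟨r, hr, μ, happ, h1, h2, h3, h, hh, mem_qp_varsOf.mpr (Or.inr (Or.inl ht)), rfl⟩
    · obtain ⟨ht, h1, h2, h3⟩ := hvars h.o (by intro x hx; simp only [QuadPattern.varsOf, Finset.mem_union]; tauto) ho
      exact ⟨r, hr, μ, happ, h1, h2, h3, h, hh, mem_qp_varsOf.mpr (Or.inr (Or.inr ht)), rfl⟩

lemma base_at_zero {QS : QuadSystem C} {i j : ℕ} {w : List (SConst C)} :
    ¬ appearsAt QS (SConst.sk i j w) 0 := by
  rintro ⟨q, hq, hocc⟩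
  obtain ⟨q', _, rfl⟩ := hq
  rcases hocc with h | h | h <;> simp [Quad.toGQuad] at h

/-- Main structural lemma about skolem blank nodes in the chase. -/
lemma main_lemma {QS : QuadSystem C} (hwf : QS.WF) {i j : ℕ} {w : List (SConst C)}
    (hb : inChase QS (SConst.sk i j w)) :
    ∃ r ∈ QS.rules, r.id = i ∧ j ∈ r.exVars ∧ (∃ h ∈ r.head, j ∈ h.varsOf) ∧
      originContexts QS (SConst.sk i j w) = ctxSet r j ∧
      ∃ μ, r.frontier.map μ = w ∧
        ∀ h ∈ r.head, ∃ m, h.inst (skExt r μ) ∈ dChaseAt QS m := by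
  classical
  set b := SConst.sk i j w with hbdef
  obtain ⟨q, hq, hocc⟩ := hb
  obtain ⟨N, hN⟩ : ∃ N, q ∈ dChaseAt QS N := by
    simpa [dChase] using hq
  have hap : ∃ n, appearsAt QS b n := ⟨N, q, hN, hocc⟩
  set n₀ := Nat.find hap with hn0
  have hspec : appearsAt QS b n₀ := Nat.find_spec hap
  have hmin : ∀ m, m < n₀ → ¬ appearsAt QS b m := fun m hm => Nat.find_min hap hm
  have hn0pos : n₀ ≠ 0 := fun h => base_at_zero (h ▸ hspec)
  obtain ⟨m, hm⟩ : ∃ m, n₀ = m + 1 := ⟨n₀ - 1, (Nat.succ_pred_eq_of_pos (Nat.pos_of_ne_zero hn0pos)).symm⟩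
  have hfresh : ∀ q' ∈ dChaseAt QS m, ¬ occursIn b q' := by
    intro q' hq' ho'
    exact hmin m (by omega) ⟨q', hq', ho'⟩
  obtain ⟨q₀, hq₀, ho₀⟩ := id hspec
  rw [hm] at hq₀
  obtain ⟨r, hr, μ, happ, hid, hex, hmap, h₀, hh₀, hv₀, hq₀eq⟩ :=
    key_quad hwf hq₀ hfresh ho₀
  have hfull : ∀ h ∈ r.head, h.inst (skExt r μ) ∈ dChaseAt QS (m+1) := by
    intro h hh
    exact Or.inr ⟨r, hr, μ, happ, h, hh, rfl⟩
  refine ⟨r, hr, hid, hex, ⟨h₀, hh₀, hv₀⟩, ?_, μ, hmap, fun h hh => ⟨m+1, hfull h hh⟩⟩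
  ext c
  constructor
  · rintro ⟨n, hnmin, q', hq', ho', hctx⟩
    have hle : n₀ ≤ n := Nat.find_min' hap ⟨q', hq', ho'⟩
    have hge : ¬ (n₀ < n) := fun hlt => hnmin n₀ hlt hspec
    have hn : n = n₀ := le_antisymm (not_lt.mp hge) hle
    rw [hn, hm] at hq'
    obtain ⟨r', hr', μ', _, hid', _, _, h, hh, hv, rfl⟩ :=
      key_quad hwf hq' hfresh ho'
    have : r' = r := hwf.2.1 r' hr' r hr (by rw [hid', hid])
    subst this
    exact ⟨h, hh, hv, hctx⟩
  · rintro ⟨h, hh, hv, hctx⟩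
    refine ⟨n₀, hmin, h.inst (skExt r μ), hm ▸ hfull h hh, ?_, hctx⟩
    have : skExt r μ j = b := by
      simp [skExt, if_pos hex, hid, hmap, hbdef]
    exact this ▸ occursIn_inst_of_var (skExt r μ) hv

end Aux


lemma unmsafe_to_uncsafe {C : Type} {QS : QuadSystem C} (hwf : QS.WF)
    (h : QS.Unmsafe) : QS.Uncsafe := by
  obtain ⟨i, j, w, j', w', hb, hb', hne, hdesc⟩ := h
  obtain ⟨r, hr, hid, hex, ⟨h₀, hh₀, hv₀⟩, hctx, -⟩ := main_lemma hwf hb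
  obtain ⟨r', hr', hid', hex', -, hctx', μ', hmap', hfull'⟩ := main_lemma hwf hb'
  have hrr : r' = r := hwf.2.1 r' hr' r hr (hid'.trans hid.symm)
  subst hrr
  refine ⟨SConst.sk i j w, SConst.sk i j w', trivial, trivial, ?_, hb, ?_, ?_, ?_⟩
  case refine_2 =>
    obtain ⟨m, hm⟩ := hfull' h₀ hh₀
    refine ⟨h₀.inst (skExt r' μ'), Set.mem_iUnion.mpr ⟨m, hm⟩, ?_⟩
    have hsk : skExt r' μ' j = SConst.sk i j w' := by
      simp [skExt, if_pos hex, hid, hmap']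
    exact hsk ▸ occursIn_inst_of_var _ hv₀
  case refine_3 =>
    obtain ⟨x, hrt, hch⟩ := (Relation.TransGen.tail'_iff).mp hdesc
    obtain ⟨i₂, j₂, w₂, heq, hx⟩ := hch
    obtain ⟨rfl, rfl, rfl⟩ := SConst.sk.inj heq
    exact Relation.TransGen.tail' hrt ⟨i, j, w', rfl, hx⟩
  case refine_1 =>
    intro he
    obtain ⟨x, hrt, hch⟩ := (Relation.TransGen.tail'_iff).mp hdesc
    obtain ⟨i₂, j₂, w₂, heq, hx⟩ := hch
    obtain ⟨rfl, rfl, rfl⟩ := SConst.sk.inj heq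
    have hd : descOf (SConst.sk i j w) (SConst.sk i j w') :=
      Relation.TransGen.tail' hrt ⟨i, j, w', rfl, hx⟩
    rw [he] at hd
    exact descOf_irrefl _ hd
  case refine_4 =>
    have hb'' : inChase QS (SConst.sk i j w') := by
      obtain ⟨m, hm⟩ := hfull' h₀ hh₀
      refine ⟨h₀.inst (skExt r' μ'), Set.mem_iUnion.mpr ⟨m, hm⟩, ?_⟩
      have hsk : skExt r' μ' j = SConst.sk i j w' := by
        simp [skExt, if_pos hex, hid, hmap']
      exact hsk ▸ occursIn_inst_of_var _ hv₀
    obtain ⟨r₂, hr₂, hid₂, _, _, h2, -⟩ := main_lemma hwf hb''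
    have : r₂ = r' := hwf.2.1 r₂ hr₂ r' hr (hid₂.trans hid.symm)
    subst this
    exact hctx.trans h2.symm

lemma unsafe_to_unmsafe {C : Type} {QS : QuadSystem C} (h : QS.Unsafe) : QS.Unmsafe := by
  obtain ⟨i, j, w, j', w', h1, h2, h3, h4, -⟩ := h
  exact ⟨i, j, w, j', w', h1, h2, h3, h4⟩

namespace Ex3

def n1 : SConst ℕ := .sk 1 0 []
def n2 : SConst ℕ := .sk 2 1 [n1]
def q0 : GQuad ℕ := ⟨3, .base 0, .base 0, .base 0⟩
def q1 : GQuad ℕ := ⟨3, n1, .base 1, n1⟩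
def q2 : GQuad ℕ := ⟨3, n2, .base 2, n1⟩

def r1 : BridgeRule ℕ :=
  ⟨1, [⟨3, .const 0, .const 0, .const 0⟩], [⟨3, .var 0, .const 1, .var 0⟩], [], {0}⟩
def r2 : BridgeRule ℕ :=
  ⟨2, [⟨3, .var 0, .const 1, .var 0⟩], [⟨3, .var 1, .const 2, .var 0⟩], [0], {1}⟩

def QS : QuadSystem ℕ := ⟨{⟨3, 0, 0, 0⟩}, {r1, r2}⟩

def I0 : Set (GQuad ℕ) := {q0}
def I1 : Set (GQuad ℕ) := {q0, q1}
def I2 : Set (GQuad ℕ) := {q0, q1, q2}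

lemma r1_ne_r2 : r1 ≠ r2 := by simp [r1, r2]

lemma wf : QS.WF := by
  refine ⟨?_, ?_, Set.finite_singleton _, (Set.finite_singleton r2).insert r1⟩
  · rintro r (rfl | rfl) <;>
      refine ⟨?_, ?_, ?_, ?_⟩ <;>
      simp [BridgeRule.WF, patsVars, QuadPattern.varsOf, Term.varsOf, r1, r2] <;> decide
  · rintro r (rfl | rfl) r' (rfl | rfl) h <;> first | rfl | (simp [r1, r2] at h)

lemma step0 : chaseStep QS I0 = I1 := by
  ext q
  simp only [chaseStep, Set.mem_union, Set.mem_setOf_eq]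
  constructor
  · rintro (hq | ⟨r, hr, μ, happ, hap⟩)
    · exact Or.inl hq
    · rcases hr with rfl | rfl
      · right
        obtain ⟨h, hh, rfl⟩ := hap
        simp only [r1, List.mem_singleton] at hh
        subst hh
        simp [QuadPattern.inst, Term.inst, skExt, r1, q1, n1, I1]
      · exfalso
        have := happ.1 ⟨3, .var 0, .const 1, .var 0⟩ (by simp [r2])
        simp only [QuadPattern.inst, Term.inst, I0, Set.mem_singleton_iff, q0,
          GQuad.mk.injEq] at this
        simp at this
  · rintro (rfl | rfl)
    · exact Or.inl rfl
    · right
      refine ⟨r1, Or.inl rfl, fun _ => .base 0, ⟨?_, ?_⟩, ?_⟩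
      · rintro p hp
        simp only [r1, List.mem_singleton] at hp
        subst hp
        simp [QuadPattern.inst, Term.inst, I0, q0]
      · rintro ⟨ν, hν, hall⟩
        have := hall ⟨3, .var 0, .const 1, .var 0⟩ (by simp [r1])
        simp only [QuadPattern.inst, Term.inst, I0, Set.mem_singleton_iff, q0,
          GQuad.mk.injEq] at this
        simp at this
      · refine ⟨⟨3, .var 0, .const 1, .var 0⟩, by simp [r1], ?_⟩
        simp [QuadPattern.inst, Term.inst, skExt, r1, q1, n1]

lemma step1 : chaseStep QS I1 = I2 := by
  ext q
  simp only [chaseStep, Set.mem_union, Set.mem_setOf_eq]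
  constructor
  · rintro (hq | ⟨r, hr, μ, happ, hap⟩)
    · rcases hq with rfl | rfl
      · exact Or.inl rfl
      · exact Or.inr (Or.inl rfl)
    · rcases hr with rfl | rfl
      · exfalso
        refine happ.2 ⟨fun v => if v ∈ r1.exVars then n1 else μ v,
          fun v hv => by simp [if_neg hv], ?_⟩
        rintro p hp
        simp only [r1, List.mem_singleton] at hp
        subst hp
        simp [QuadPattern.inst, Term.inst, r1, I1, q1]
      · obtain ⟨h, hh, rfl⟩ := hap
        simp only [r2, List.mem_singleton] at hh
        subst hh
        have hb := happ.1 ⟨3, .var 0, .const 1, .var 0⟩ (by simp [r2])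
        simp only [QuadPattern.inst, Term.inst, I1, Set.mem_insert_iff,
          Set.mem_singleton_iff] at hb
        rcases hb with hb | hb
        · exfalso; simp [q0] at hb
        · have h1 : μ 0 = n1 := by simp [q1] at hb; tauto
          right; right
          simp [QuadPattern.inst, Term.inst, skExt, r2, q2, n2, h1]
  · rintro (rfl | rfl | rfl)
    · exact Or.inl (Or.inl rfl)
    · exact Or.inl (Or.inr rfl)
    · right
      refine ⟨r2, Or.inr rfl, fun _ => n1, ⟨?_, ?_⟩, ?_⟩
      · rintro p hp
        simp only [r2, List.mem_singleton] at hp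
        subst hp
        simp [QuadPattern.inst, Term.inst, I1, q1]
      · rintro ⟨ν, hν, hall⟩
        have := hall ⟨3, .var 1, .const 2, .var 0⟩ (by simp [r2])
        simp only [QuadPattern.inst, Term.inst, I1, Set.mem_insert_iff,
          Set.mem_singleton_iff] at this
        rcases this with h | h
        · simp [q0] at h
        · simp [q1, n1] at h
      · refine ⟨⟨3, .var 1, .const 2, .var 0⟩, by simp [r2], ?_⟩
        simp [QuadPattern.inst, Term.inst, skExt, r2, q2, n2]

lemma step2 : chaseStep QS I2 = I2 := by
  ext q
  simp only [chaseStep, Set.mem_union, Set.mem_setOf_eq]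
  constructor
  · rintro (hq | ⟨r, hr, μ, happ, hap⟩)
    · exact hq
    · exfalso
      rcases hr with rfl | rfl
      · refine happ.2 ⟨fun v => if v ∈ r1.exVars then n1 else μ v,
          fun v hv => by simp [if_neg hv], ?_⟩
        rintro p hp
        simp only [r1, List.mem_singleton] at hp
        subst hp
        simp [QuadPattern.inst, Term.inst, r1, I2, q1]
      · have hb := happ.1 ⟨3, .var 0, .const 1, .var 0⟩ (by simp [r2])
        simp only [QuadPattern.inst, Term.inst, I2, Set.mem_insert_iff,
          Set.mem_singleton_iff] at hb
        rcases hb with hb | hb | hb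
        · simp [q0] at hb
        · have h1 : μ 0 = n1 := by simp [q1] at hb; tauto
          refine happ.2 ⟨fun v => if v ∈ r2.exVars then n2 else μ v,
            fun v hv => by simp [if_neg hv], ?_⟩
          rintro p hp
          simp only [r2, List.mem_singleton] at hp
          subst hp
          simp [QuadPattern.inst, Term.inst, r2, I2, q2, h1]
        · simp [q2, n2] at hb
  · intro hq
    exact Or.inl hq

lemma dChaseAt0 : dChaseAt QS 0 = I0 := by
  simp [dChaseAt, QS, Set.image_singleton, I0, q0, Quad.toGQuad]

lemma dChaseAt1 : dChaseAt QS 1 = I1 := by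
  rw [show (1:ℕ) = 0 + 1 from rfl, dChaseAt, dChaseAt0, step0]

lemma dChaseAt_ge2 : ∀ n, dChaseAt QS (n + 2) = I2 := by
  intro n
  induction n with
  | zero => rw [show (0+2:ℕ) = 1 + 1 from rfl, dChaseAt, dChaseAt1, step1]
  | succ n ih => rw [show (n+1+2:ℕ) = (n+2) + 1 from rfl, dChaseAt, ih, step2]

lemma dChaseAt_sub : ∀ n, dChaseAt QS n ⊆ I2 := by
  intro n
  match n with
  | 0 => rw [dChaseAt0]; intro q hq; exact Or.inl hq
  | 1 => rw [dChaseAt1]; rintro q (hq | hq); exacts [Or.inl hq, Or.inr (Or.inl hq)]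
  | (n+2) => rw [dChaseAt_ge2]

lemma dchase_eq : dChase QS = I2 := by
  apply le_antisymm
  · exact Set.iUnion_subset dChaseAt_sub
  · intro q hq
    exact Set.mem_iUnion.mpr ⟨2, by rw [show (2:ℕ) = 0 + 2 from rfl, dChaseAt_ge2]; exact hq⟩

lemma skOnly : ∀ {i j : ℕ} {w : List (SConst ℕ)}, inChase QS (SConst.sk i j w) →
    (i = 1 ∧ j = 0 ∧ w = []) ∨ (i = 2 ∧ j = 1 ∧ w = [n1]) := by
  rintro i j w ⟨q, hq, hocc⟩
  rw [dchase_eq] at hq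
  rcases hq with rfl | rfl | rfl <;>
    rcases hocc with h | h | h <;>
    simp only [q0, q1, q2, n1, n2] at h <;>
    first
      | (exfalso; cases h; done)
      | (obtain ⟨h1, h2, h3⟩ := SConst.sk.inj h; subst h1; subst h2; subst h3; simp [n1])

lemma msafe : QS.Msafe := by
  rintro ⟨i, j, w, j', w', hb, hb', hne, hdesc⟩
  rcases skOnly hb with ⟨rfl, rfl, rfl⟩ | ⟨rfl, rfl, rfl⟩ <;>
    rcases skOnly hb' with ⟨hi, rfl, rfl⟩ | ⟨hi, rfl, rfl⟩
  · exact hne rfl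
  · simp at hi
  · simp at hi
  · exact hne rfl

lemma appears0 : ∀ b : SConst ℕ, b.isSk → ¬ appearsAt QS b 0 := by
  rintro b hsk ⟨q, hq, hocc⟩
  rw [dChaseAt0] at hq
  rcases hq with rfl
  rcases hocc with h | h | h <;>
    (cases b with
     | base a => exact hsk
     | sk i j w => simp [q0] at h)

lemma n1_ne_n2 : n1 ≠ n2 := by simp [n1, n2]

lemma octx1 : originContexts QS n1 = {3} := by
  ext c
  constructor
  · rintro ⟨n, hmin, q, hq, hocc, rfl⟩
    have := dChaseAt_sub n hq
    rcases this with rfl | rfl | rfl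
    · rcases hocc with h | h | h <;> simp [q0, n1] at h
    · simp [q1]
    · simp [q2]
  · rintro rfl
    refine ⟨1, ?_, q1, by rw [dChaseAt1]; exact Or.inr rfl, Or.inl rfl, rfl⟩
    intro m hm
    interval_cases m
    exact appears0 n1 trivial

lemma n2_not_at1 : ¬ appearsAt QS n2 1 := by
  rintro ⟨q, hq, hocc⟩
  rw [dChaseAt1] at hq
  rcases hq with rfl | rfl <;>
    rcases hocc with h | h | h <;>
    simp [q0, q1, n1, n2] at h

lemma octx2 : originContexts QS n2 = {3} := by
  ext c
  constructor
  · rintro ⟨n, hmin, q, hq, hocc, rfl⟩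
    have := dChaseAt_sub n hq
    rcases this with rfl | rfl | rfl
    · rcases hocc with h | h | h <;> simp [q0, n2] at h
    · simp [q1]
    · simp [q2]
  · rintro rfl
    refine ⟨2, ?_, q2, ?_, Or.inl rfl, rfl⟩
    case refine_2 =>
      rw [show (2:ℕ) = 0 + 2 from rfl, dChaseAt_ge2]
      exact Or.inr (Or.inr rfl)
    intro m hm
    interval_cases m
    · exact appears0 n2 trivial
    · exact n2_not_at1

lemma not_csafe : ¬ QS.Csafe := by
  intro h
  refine h ⟨n1, n2, trivial, trivial, n1_ne_n2, ?_, ?_, ?_, octx1.trans octx2.symm⟩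
  · exact ⟨q1, by rw [dchase_eq]; exact Or.inr (Or.inl rfl), Or.inl rfl⟩
  · exact ⟨q2, by rw [dchase_eq]; exact Or.inr (Or.inr rfl), Or.inl rfl⟩
  · exact Relation.TransGen.single ⟨2, 1, [n1], rfl, by simp⟩

end Ex3

lemma exists_msafe_not_csafe : ∃ QS : QuadSystem ℕ, QS.WF ∧ QS.Msafe ∧ ¬ QS.Csafe :=
  ⟨Ex3.QS, Ex3.wf, Ex3.msafe, Ex3.not_csafe⟩

namespace Ex4

def m1 : SConst ℕ := .sk 1 3 [.base 0, .base 4]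
def m2 : SConst ℕ := .sk 1 3 [m1, .base 5]

def p0 : GQuad ℕ := ⟨6, .base 0, .base 1, .base 3⟩
def pA : GQuad ℕ := ⟨6, .base 3, .base 2, .base 4⟩
def pB : GQuad ℕ := ⟨6, .base 4, .base 2, .base 5⟩
def p1 : GQuad ℕ := ⟨6, m1, .base 1, .base 4⟩
def p2 : GQuad ℕ := ⟨6, m1, .base 0, .base 0⟩
def p3 : GQuad ℕ := ⟨6, m2, .base 1, .base 5⟩
def p4 : GQuad ℕ := ⟨6, m2, m1, m1⟩

def bd1 : QuadPattern ℕ := ⟨6, .var 0, .const 1, .var 1⟩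
def bd2 : QuadPattern ℕ := ⟨6, .var 1, .const 2, .var 2⟩
def hd1 : QuadPattern ℕ := ⟨6, .var 3, .const 1, .var 2⟩
def hd2 : QuadPattern ℕ := ⟨6, .var 3, .var 0, .var 0⟩

def r : BridgeRule ℕ := ⟨1, [bd1, bd2], [hd1, hd2], [0, 2], {3}⟩

def QS : QuadSystem ℕ := ⟨{⟨6, 0, 1, 3⟩, ⟨6, 3, 2, 4⟩, ⟨6, 4, 2, 5⟩}, {r}⟩

def J0 : Set (GQuad ℕ) := {p0, pA, pB}
def J1 : Set (GQuad ℕ) := {p0, pA, pB, p1, p2}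
def J2 : Set (GQuad ℕ) := {p0, pA, pB, p1, p2, p3, p4}

lemma wf : QS.WF := by
  refine ⟨?_, ?_, ?_, Set.finite_singleton _⟩
  · rintro r' rfl
    refine ⟨?_, ?_, ?_, ?_⟩ <;>
      simp [BridgeRule.WF, patsVars, QuadPattern.varsOf, Term.varsOf, r, bd1, bd2, hd1, hd2] <;>
      decide
  · rintro r' rfl r'' rfl _; rfl
  · exact ((Set.finite_singleton _).insert _).insert _

def μA : ℕ → SConst ℕ := fun v => if v = 0 then .base 0 else if v = 1 then .base 3
  else if v = 2 then .base 4 else .base 0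
def μB : ℕ → SConst ℕ := fun v => if v = 0 then m1 else if v = 1 then .base 4
  else if v = 2 then .base 5 else .base 0

lemma appA : applicable r μA J0 := by
  constructor
  · rintro p hp
    simp only [r, List.mem_cons, List.mem_singleton, List.not_mem_nil, or_false] at hp
    rcases hp with rfl | rfl <;>
      simp [QuadPattern.inst, Term.inst, bd1, bd2, J0, p0, pA, μA]
  · rintro ⟨ν, hν, hall⟩
    have h2 : ν 2 = .base 4 := by
      have := hν 2 (by simp [r]); simpa [μA] using this
    have := hall hd1 (by simp [r])
    simp only [QuadPattern.inst, Term.inst, hd1, J0, Set.mem_insert_iff,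
      Set.mem_singleton_iff, h2] at this
    rcases this with h | h | h
    · simp [p0, m1, m2] at h
    · simp [pA, m1, m2] at h
    · simp [pB, m1, m2] at h

lemma appB : applicable r μB J1 := by
  constructor
  · rintro p hp
    simp only [r, List.mem_cons, List.mem_singleton, List.not_mem_nil, or_false] at hp
    rcases hp with rfl | rfl <;>
      simp [QuadPattern.inst, Term.inst, bd1, bd2, J1, p1, pB, μB]
  · rintro ⟨ν, hν, hall⟩
    have h2 : ν 2 = .base 5 := by
      have := hν 2 (by simp [r]); simpa [μB] using this
    have := hall hd1 (by simp [r])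
    simp only [QuadPattern.inst, Term.inst, hd1, J1, Set.mem_insert_iff,
      Set.mem_singleton_iff, h2] at this
    rcases this with h | h | h | h | h
    · simp [p0, m1, m2] at h
    · simp [pA, m1, m2] at h
    · simp [pB, m1, m2] at h
    · simp [p1, m1, m2] at h
    · simp [p2, m1, m2] at h

lemma step0 : chaseStep QS J0 = J1 := by
  ext q
  simp only [chaseStep, Set.mem_union, Set.mem_setOf_eq]
  constructor
  · rintro (hq | ⟨r', hr', μ, happ, hap⟩)
    · rcases hq with rfl | rfl | rfl
      · exact Or.inl rfl
      · exact Or.inr (Or.inl rfl)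
      · exact Or.inr (Or.inr (Or.inl rfl))
    · rcases hr' with rfl
      have hb1 := happ.1 bd1 (by simp [r])
      have hb2 := happ.1 bd2 (by simp [r])
      simp only [QuadPattern.inst, Term.inst, bd1, bd2, J0, Set.mem_insert_iff,
        Set.mem_singleton_iff] at hb1 hb2
      rcases hb1 with hb1 | hb1 | hb1
      · have h0 : μ 0 = .base 0 := by simp [p0, m1, m2] at hb1; tauto
        have h1 : μ 1 = .base 3 := by simp [p0, m1, m2] at hb1; tauto
        rw [h1] at hb2
        rcases hb2 with hb2 | hb2 | hb2
        · simp [p0, m1, m2] at hb2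
        · have h2 : μ 2 = .base 4 := by simp [pA, m1, m2] at hb2; tauto
          obtain ⟨h, hh, rfl⟩ := hap
          simp only [r, List.mem_cons, List.mem_singleton, List.not_mem_nil, or_false] at hh
          rcases hh with rfl | rfl
          · right; right; right; left
            simp [QuadPattern.inst, Term.inst, skExt, r, hd1, p1, m1, h0, h2]
          · right; right; right; right
            simp [QuadPattern.inst, Term.inst, skExt, r, hd2, p2, m1, h0, h2]
        · simp [pB, m1, m2] at hb2
      · simp [pA, m1, m2] at hb1
      · simp [pB, m1, m2] at hb1
  · rintro (rfl | rfl | rfl | rfl | rfl)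
    · exact Or.inl (Or.inl rfl)
    · exact Or.inl (Or.inr (Or.inl rfl))
    · exact Or.inl (Or.inr (Or.inr rfl))
    · exact Or.inr ⟨r, rfl, μA, appA, hd1, by simp [r],
        by simp [QuadPattern.inst, Term.inst, skExt, r, hd1, p1, m1, μA]⟩
    · exact Or.inr ⟨r, rfl, μA, appA, hd2, by simp [r],
        by simp [QuadPattern.inst, Term.inst, skExt, r, hd2, p2, m1, μA]⟩

lemma step1 : chaseStep QS J1 = J2 := by
  ext q
  simp only [chaseStep, Set.mem_union, Set.mem_setOf_eq]
  constructor
  · rintro (hq | ⟨r', hr', μ, happ, hap⟩)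
    · rcases hq with rfl | rfl | rfl | rfl | rfl
      · exact Or.inl rfl
      · exact Or.inr (Or.inl rfl)
      · exact Or.inr (Or.inr (Or.inl rfl))
      · exact Or.inr (Or.inr (Or.inr (Or.inl rfl)))
      · exact Or.inr (Or.inr (Or.inr (Or.inr (Or.inl rfl))))
    · rcases hr' with rfl
      have hb1 := happ.1 bd1 (by simp [r])
      have hb2 := happ.1 bd2 (by simp [r])
      simp only [QuadPattern.inst, Term.inst, bd1, bd2, J1, Set.mem_insert_iff,
        Set.mem_singleton_iff] at hb1 hb2
      rcases hb1 with hb1 | hb1 | hb1 | hb1 | hb1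
      · -- μ0 = base 0, μ1 = base 3 : head already satisfied
        exfalso
        have h0 : μ 0 = .base 0 := by simp [p0, m1, m2] at hb1; tauto
        have h1 : μ 1 = .base 3 := by simp [p0, m1, m2] at hb1; tauto
        rw [h1] at hb2
        have h2 : μ 2 = .base 4 := by
          rcases hb2 with hb2 | hb2 | hb2 | hb2 | hb2
          · simp [p0, m1, m2] at hb2
          · simp [pA, m1, m2] at hb2; tauto
          · simp [pB, m1, m2] at hb2
          · simp [p1, m1, m2] at hb2
          · simp [p2, m1, m2] at hb2
        refine happ.2 ⟨fun v => if v ∈ r.exVars then m1 else μ v,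
          fun v hv => by simp [if_neg hv], ?_⟩
        rintro p hp
        simp only [r, List.mem_cons, List.mem_singleton, List.not_mem_nil, or_false] at hp
        rcases hp with rfl | rfl <;>
          simp [QuadPattern.inst, Term.inst, r, hd1, hd2, J1, p1, p2, m1, h0, h2]
      · exfalso; simp [pA, m1, m2] at hb1
      · exfalso; simp [pB, m1, m2] at hb1
      · -- μ0 = m1, μ1 = base 4 : produces p3, p4
        have h0 : μ 0 = m1 := by simp [p1, m1, m2] at hb1; tauto
        have h1 : μ 1 = .base 4 := by simp [p1, m1, m2] at hb1; tauto
        rw [h1] at hb2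
        have h2 : μ 2 = .base 5 := by
          rcases hb2 with hb2 | hb2 | hb2 | hb2 | hb2
          · simp [p0, m1, m2] at hb2
          · simp [pA, m1, m2] at hb2
          · simp [pB, m1, m2] at hb2; tauto
          · simp [p1, m1, m2] at hb2
          · simp [p2, m1, m2] at hb2
        obtain ⟨h, hh, rfl⟩ := hap
        simp only [r, List.mem_cons, List.mem_singleton, List.not_mem_nil, or_false] at hh
        rcases hh with rfl | rfl
        · right; right; right; right; right; left
          simp [QuadPattern.inst, Term.inst, skExt, r, hd1, p3, m2, h0, h2]
        · right; right; right; right; right; right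
          simp [QuadPattern.inst, Term.inst, skExt, r, hd2, p4, m2, h0, h2]
      · exfalso; simp [p2, m1, m2] at hb1
  · rintro (rfl | rfl | rfl | rfl | rfl | rfl | rfl)
    · exact Or.inl (Or.inl rfl)
    · exact Or.inl (Or.inr (Or.inl rfl))
    · exact Or.inl (Or.inr (Or.inr (Or.inl rfl)))
    · exact Or.inl (Or.inr (Or.inr (Or.inr (Or.inl rfl))))
    · exact Or.inl (Or.inr (Or.inr (Or.inr (Or.inr rfl))))
    · exact Or.inr ⟨r, rfl, μB, appB, hd1, by simp [r],
        by simp [QuadPattern.inst, Term.inst, skExt, r, hd1, p3, m1, m2, μB]⟩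
    · exact Or.inr ⟨r, rfl, μB, appB, hd2, by simp [r],
        by simp [QuadPattern.inst, Term.inst, skExt, r, hd2, p4, m1, m2, μB]⟩

lemma step2 : chaseStep QS J2 = J2 := by
  ext q
  simp only [chaseStep, Set.mem_union, Set.mem_setOf_eq]
  constructor
  · rintro (hq | ⟨r', hr', μ, happ, hap⟩)
    · exact hq
    · exfalso
      rcases hr' with rfl
      have hb1 := happ.1 bd1 (by simp [r])
      have hb2 := happ.1 bd2 (by simp [r])
      simp only [QuadPattern.inst, Term.inst, bd1, bd2, J2, Set.mem_insert_iff,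
        Set.mem_singleton_iff] at hb1 hb2
      rcases hb1 with hb1 | hb1 | hb1 | hb1 | hb1 | hb1 | hb1
      · have h0 : μ 0 = .base 0 := by simp [p0, m1, m2] at hb1; tauto
        have h1 : μ 1 = .base 3 := by simp [p0, m1, m2] at hb1; tauto
        rw [h1] at hb2
        have h2 : μ 2 = .base 4 := by
          rcases hb2 with hb2 | hb2 | hb2 | hb2 | hb2 | hb2 | hb2
          · simp [p0, m1, m2] at hb2
          · simp [pA, m1, m2] at hb2; tauto
          · simp [pB, m1, m2] at hb2
          · simp [p1, m1, m2] at hb2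
          · simp [p2, m1, m2] at hb2
          · simp [p3, m1, m2] at hb2
          · simp [p4, m1, m2] at hb2
        refine happ.2 ⟨fun v => if v ∈ r.exVars then m1 else μ v,
          fun v hv => by simp [if_neg hv], ?_⟩
        rintro p hp
        simp only [r, List.mem_cons, List.mem_singleton, List.not_mem_nil, or_false] at hp
        rcases hp with rfl | rfl <;>
          simp [QuadPattern.inst, Term.inst, r, hd1, hd2, J2, p1, p2, m1, h0, h2]
      · simp [pA, m1, m2] at hb1
      · simp [pB, m1, m2] at hb1
      · have h0 : μ 0 = m1 := by simp [p1, m1, m2] at hb1; tauto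
        have h1 : μ 1 = .base 4 := by simp [p1, m1, m2] at hb1; tauto
        rw [h1] at hb2
        have h2 : μ 2 = .base 5 := by
          rcases hb2 with hb2 | hb2 | hb2 | hb2 | hb2 | hb2 | hb2
          · simp [p0, m1, m2] at hb2
          · simp [pA, m1, m2] at hb2
          · simp [pB, m1, m2] at hb2; tauto
          · simp [p1, m1, m2] at hb2
          · simp [p2, m1, m2] at hb2
          · simp [p3, m1, m2] at hb2
          · simp [p4, m1, m2] at hb2
        refine happ.2 ⟨fun v => if v ∈ r.exVars then m2 else μ v,
          fun v hv => by simp [if_neg hv], ?_⟩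
        rintro p hp
        simp only [r, List.mem_cons, List.mem_singleton, List.not_mem_nil, or_false] at hp
        rcases hp with rfl | rfl <;>
          simp [QuadPattern.inst, Term.inst, r, hd1, hd2, J2, p3, p4, m2, h0, h2]
      · simp [p2, m1, m2] at hb1
      · -- hb1 matches p3 : μ0 = m2, μ1 = base 5, but then hb2 has no match
        have h1 : μ 1 = .base 5 := by simp [p3, m1, m2] at hb1; tauto
        rw [h1] at hb2
        rcases hb2 with hb2 | hb2 | hb2 | hb2 | hb2 | hb2 | hb2
        · simp [p0, m1, m2] at hb2
        · simp [pA, m1, m2] at hb2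
        · simp [pB, m1, m2] at hb2
        · simp [p1, m1, m2] at hb2
        · simp [p2, m1, m2] at hb2
        · simp [p3, m1, m2] at hb2
        · simp [p4, m1, m2] at hb2
      · simp [p4, m1, m2] at hb1
  · intro hq
    exact Or.inl hq

lemma dChaseAt0 : dChaseAt QS 0 = J0 := by
  simp only [dChaseAt, QS]
  rw [Set.image_insert_eq, Set.image_insert_eq, Set.image_singleton]
  simp [J0, p0, pA, pB, Quad.toGQuad]

lemma dChaseAt1 : dChaseAt QS 1 = J1 := by
  rw [show (1:ℕ) = 0 + 1 from rfl, dChaseAt, dChaseAt0, step0]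

lemma dChaseAt_ge2 : ∀ n, dChaseAt QS (n + 2) = J2 := by
  intro n
  induction n with
  | zero => rw [show (0+2:ℕ) = 1 + 1 from rfl, dChaseAt, dChaseAt1, step1]
  | succ n ih => rw [show (n+1+2:ℕ) = (n+2) + 1 from rfl, dChaseAt, ih, step2]

lemma dChaseAt_sub : ∀ n, dChaseAt QS n ⊆ J2 := by
  intro n
  match n with
  | 0 =>
    rw [dChaseAt0]
    rintro q (rfl | rfl | rfl)
    exacts [Or.inl rfl, Or.inr (Or.inl rfl), Or.inr (Or.inr (Or.inl rfl))]
  | 1 =>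
    rw [dChaseAt1]
    rintro q (rfl | rfl | rfl | rfl | rfl)
    exacts [Or.inl rfl, Or.inr (Or.inl rfl), Or.inr (Or.inr (Or.inl rfl)),
      Or.inr (Or.inr (Or.inr (Or.inl rfl))), Or.inr (Or.inr (Or.inr (Or.inr (Or.inl rfl))))]
  | (n+2) => rw [dChaseAt_ge2]

lemma dchase_eq : dChase QS = J2 := by
  apply le_antisymm
  · exact Set.iUnion_subset dChaseAt_sub
  · intro q hq
    exact Set.mem_iUnion.mpr ⟨2, by rw [show (2:ℕ) = 0 + 2 from rfl, dChaseAt_ge2]; exact hq⟩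

lemma skOnly : ∀ {i j : ℕ} {w : List (SConst ℕ)}, inChase QS (SConst.sk i j w) →
    (i = 1 ∧ j = 3 ∧ w = [.base 0, .base 4]) ∨ (i = 1 ∧ j = 3 ∧ w = [m1, .base 5]) := by
  rintro i j w ⟨q, hq, hocc⟩
  rw [dchase_eq] at hq
  rcases hq with rfl | rfl | rfl | rfl | rfl | rfl | rfl <;>
    rcases hocc with h | h | h <;>
    simp only [p0, pA, pB, p1, p2, p3, p4, m1, m2] at h <;>
    first
      | (exfalso; cases h; done)
      | (obtain ⟨h1, h2, h3⟩ := SConst.sk.inj h; subst h1; subst h2; subst h3; simp [m1])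

lemma m1_in : inChase QS m1 := by
  refine ⟨p1, ?_, Or.inl rfl⟩
  rw [dchase_eq]
  exact Or.inr (Or.inr (Or.inr (Or.inl rfl)))

lemma m2_in : inChase QS m2 := by
  refine ⟨p3, ?_, Or.inl rfl⟩
  rw [dchase_eq]
  exact Or.inr (Or.inr (Or.inr (Or.inr (Or.inr (Or.inl rfl)))))

lemma not_msafe : ¬ QS.Msafe := by
  intro h
  refine h ⟨1, 3, [.base 0, .base 4], 3, [m1, .base 5], m1_in, m2_in, ?_, ?_⟩
  · simp [m1]
  · exact Relation.TransGen.single ⟨1, 3, [m1, .base 5], rfl, by simp [m1]⟩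

lemma safe : QS.Safe := by
  rintro ⟨i, j, w, j', w', hb, hb', hne, hdesc, hiso⟩
  rcases skOnly hb with ⟨rfl, rfl, rfl⟩ | ⟨rfl, rfl, rfl⟩ <;>
    rcases skOnly hb' with ⟨-, rfl, rfl⟩ | ⟨-, rfl, rfl⟩
  · exact hne rfl
  · -- the genuinely interesting case: VecIso fails
    obtain ⟨g, hmap, hfix, -⟩ := hiso
    have hg0 : g (.base 0) = .base 0 := hfix _ (by simp [SConst.isSk])
    simp only [List.map_cons, List.map_nil, hg0] at hmap
    have : m1 = SConst.base 0 := (List.cons.inj hmap).1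
    simp [m1] at this
  · -- descOf m2 m1 : impossible by size
    exfalso
    have hd2 : descOf (SConst.sk 1 3 [m1, SConst.base 5]) (SConst.sk 1 3 [m1, SConst.base 5]) :=
      Relation.TransGen.tail hdesc ⟨1, 3, [m1, .base 5], rfl, by exact List.mem_cons_self⟩
    exact descOf_irrefl _ hd2
  · exact hne rfl

end Ex4

lemma exists_safe_not_msafe : ∃ QS : QuadSystem ℕ, QS.WF ∧ QS.Safe ∧ ¬ QS.Msafe :=
  ⟨Ex4.QS, Ex4.wf, Ex4.safe, Ex4.not_msafe⟩

theorem csafe_strictSubset_msafe_strictSubset_safe :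
    (∀ (C : Type) (QS : QuadSystem C), QS.WF → QS.Csafe → QS.Msafe) ∧
    (∀ (C : Type) (QS : QuadSystem C), QS.WF → QS.Msafe → QS.Safe) ∧
    (∃ QS : QuadSystem ℕ, QS.WF ∧ QS.Msafe ∧ ¬ QS.Csafe) ∧
    (∃ QS : QuadSystem ℕ, QS.WF ∧ QS.Safe ∧ ¬ QS.Msafe) := by
  refine ⟨fun C QS hwf hc hm => hc (unmsafe_to_uncsafe hwf hm),
    fun C QS hwf hm hs => hm (unsafe_to_unmsafe hs),
    exists_msafe_not_csafe, exists_safe_not_msafe⟩
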